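/- arXiv:1909.04426 — 3 statements merged into one kernel-verified Lean document; each statement's English description precedes it below -/
import Mathlib

section
/- If P : V → V is a linear projection (P² = P) on a complex inner product space and S is a Hermitian positive definite operator on V, then every eigenvalue of the operator S⁻¹ Pᴴ S P is a nonnegative real number. -/
/-- Every eigenvalue of S⁻¹ Pᴴ S P, with S Hermitian positive definite and P a
linear projection, is a nonnegative real number. -/
theorem stmt0 {V : Type*} [NormedAddCommGroup V] [InnerProductSpace ℂ V]
    [FiniteDimensional ℂ V]
    (S Sinv P : V →ₗ[ℂ] V)
    (hS_sym : S.IsSymmetric)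
    (hS_pos : ∀ v : V, v ≠ 0 → 0 < (inner ℂ (S v) v : ℂ).re)
    (hSinv₁ : Sinv ∘ₗ S = LinearMap.id) (hSinv₂ : S ∘ₗ Sinv = LinearMap.id)
    (hP : P ∘ₗ P = P)
    (μ : ℂ)
    (hμ : Module.End.HasEigenvalue
      (Sinv ∘ₗ LinearMap.adjoint P ∘ₗ S ∘ₗ P) μ) :
    μ.im = 0 ∧ 0 ≤ μ.re := by
  obtain ⟨v, hv⟩ := hμ.exists_hasEigenvector
  have hv0 : v ≠ 0 := hv.2
  have hSinv : ∀ x, S (Sinv x) = x := by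
    intro x
    have := LinearMap.ext_iff.mp hSinv₂ x
    simpa using this
  have heq : Sinv (LinearMap.adjoint P (S (P v))) = μ • v := by
    have := hv.apply_eq_smul
    simpa using this
  have heq2 : LinearMap.adjoint P (S (P v)) = μ • S v := by
    have := congrArg S heq
    rw [hSinv] at this
    simpa using this
  have key : (inner ℂ (S (P v)) (P v) : ℂ)
      = (starRingEnd ℂ μ) * inner ℂ (S v) v := by
    have h1 : (inner ℂ ((LinearMap.adjoint P) (S (P v))) v : ℂ)
        = inner ℂ (S (P v)) (P v) := LinearMap.adjoint_inner_left P _ _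
    rw [← h1, heq2, inner_smul_left]
  have hreal : ∀ w : V, (inner ℂ (S w) w : ℂ).im = 0 := by
    intro w
    have h : starRingEnd ℂ (inner ℂ (S w) w : ℂ) = inner ℂ (S w) w := by
      rw [inner_conj_symm]
      exact (hS_sym w w).symm
    exact Complex.conj_eq_iff_im.mp h
  have hnn : ∀ w : V, 0 ≤ (inner ℂ (S w) w : ℂ).re := by
    intro w
    by_cases h : w = 0
    · simp [h]
    · exact le_of_lt (hS_pos w h)
  have hbpos : 0 < (inner ℂ (S v) v : ℂ).re := hS_pos v hv0
  have him := congrArg Complex.im key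
  have hre := congrArg Complex.re key
  rw [Complex.mul_im] at him
  rw [Complex.mul_re] at hre
  simp only [Complex.conj_re, Complex.conj_im, hreal v, hreal (P v), mul_zero,
    add_zero, sub_zero, zero_sub] at him hre
  have hμim : μ.im = 0 := by
    have : -μ.im * (inner ℂ (S v) v : ℂ).re = 0 := by linarith [him]
    rcases mul_eq_zero.mp this with h | h
    · linarith
    · linarith
  constructor
  · exact hμim
  · have := hnn (P v)
    nlinarith [hre, hbpos]
end

section
/- For Hermitian positive semidefinite matrices A and B of the same size such that A + B is positive definite, the parallel sum A : B := A (A+B)⁻¹ B is Hermitian positive semidefinite and satisfies A : B ≤ A and A : B ≤ B in the Loewner order. -/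
open Matrix ComplexOrder

/-- The parallel sum A : B = A (A+B)⁻¹ B of Hermitian positive semidefinite
matrices is Hermitian positive semidefinite and bounded above by A and B in the
Loewner order. -/
theorem stmt2 {n : ℕ} (A B : Matrix (Fin n) (Fin n) ℂ)
    (hA : A.PosSemidef) (hB : B.PosSemidef) (hAB : (A + B).PosDef) :
    (A * (A + B)⁻¹ * B).PosSemidef ∧
    (A - A * (A + B)⁻¹ * B).PosSemidef ∧
    (B - A * (A + B)⁻¹ * B).PosSemidef := by
  set S := (A + B)⁻¹ with hSdef
  have hSpd : S.PosDef := hAB.inv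
  have hS : S.PosSemidef := hSpd.posSemidef
  have hdet : IsUnit (A + B).det := hAB.det_pos.ne'.isUnit
  have h1 : (A + B) * S = 1 := mul_nonsing_inv _ hdet
  have h2 : S * (A + B) = 1 := nonsing_inv_mul _ hdet
  -- key identity: A*S*B = B - B*S*B
  have key1 : A * S * B = B - B * S * B := by
    have : A * S * B = (A + B) * S * B - B * S * B := by noncomm_ring
    rw [this, h1, one_mul]
  -- key identity: A*S*B = A - A*S*A
  have key2 : A * S * B = A - A * S * A := by
    have : A * S * B = A * S * (A + B) - A * S * A := by noncomm_ring
    rw [this, mul_assoc, h2, mul_one]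
  -- B*S*(A+B)*S*B = B*S*B
  have key3 : B * S * A * S * B + B * S * B * S * B = B * S * B := by
    have : B * S * A * S * B + B * S * B * S * B = B * (S * (A + B)) * S * B := by
      noncomm_ring
    rw [this, h2, mul_one]
  -- decomposition of A*S*B as sum of two PSD conjugations
  have hexp : A * S * B
      = (1 - S * B)ᴴ * B * (1 - S * B) + (S * B)ᴴ * A * (S * B) := by
    have hct : (1 - S * B)ᴴ = 1 - B * S := by
      rw [conjTranspose_sub, conjTranspose_one, conjTranspose_mul,
        hS.isHermitian.eq, hB.isHermitian.eq]
    have hct2 : (S * B)ᴴ = B * S := by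
      rw [conjTranspose_mul, hS.isHermitian.eq, hB.isHermitian.eq]
    rw [hct, hct2, key1]
    have expand : (1 - B * S) * B * (1 - S * B) + B * S * A * (S * B)
        = B - B * S * B - B * S * B + (B * S * B * S * B + B * S * A * S * B) := by
      noncomm_ring
    have key3' : B * S * B * S * B + B * S * A * S * B = B * S * B := by
      rw [add_comm]; exact key3
    rw [expand, key3']
    abel
  refine ⟨?_, ?_, ?_⟩
  · rw [hexp]
    exact (hB.conjTranspose_mul_mul_same _).add (hA.conjTranspose_mul_mul_same _)
  · rw [key2, sub_sub_cancel]
    have : A * S * A = Aᴴ * S * A := by rw [hA.isHermitian.eq]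
    rw [this]
    exact hS.conjTranspose_mul_mul_same _
  · rw [key1, sub_sub_cancel]
    have : B * S * B = Bᴴ * S * B := by rw [hB.isHermitian.eq]
    rw [this]
    exact hS.conjTranspose_mul_mul_same _
end

section
/- Let Ŝ = Rᴴ S̃ R with S̃ Hermitian positive definite on W̃ and R : Ŵ → W̃ injective linear, and let M⁻¹ = J S̃⁻¹ Jᴴ with J : W̃ → Ŵ linear satisfying J ∘ R = id_Ŵ. Then every eigenvalue of M⁻¹ Ŝ is real and at least 1. -/
/-- Cauchy–Schwarz for the sesquilinear form induced by a symmetric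
positive-semidefinite operator. -/
lemma cs_aux {Wt : Type*}
    [NormedAddCommGroup Wt] [InnerProductSpace ℂ Wt]
    (St : Wt →ₗ[ℂ] Wt) (hS_sym : St.IsSymmetric)
    (hN : ∀ x : Wt, 0 ≤ (inner ℂ (St x) x : ℂ).re) (x y : Wt) :
    ‖(inner ℂ (St x) y : ℂ)‖ * ‖(inner ℂ (St y) x : ℂ)‖
      ≤ (inner ℂ (St x) x : ℂ).re * (inner ℂ (St y) y : ℂ).re := by
  letI c : PreInnerProductSpace.Core ℂ Wt :=
    { inner := fun a b => inner ℂ (St a) b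
      conj_inner_symm := fun a b => by
        simpa [inner_conj_symm] using (hS_sym a b).symm
      re_inner_nonneg := hN
      add_left := fun a b z => by simp [map_add, inner_add_left]
      smul_left := fun a b r => by simp [map_smul, inner_smul_left, mul_comm] }
  exact InnerProductSpace.Core.inner_mul_inner_self_le (𝕜 := ℂ) x y

/-- Every eigenvalue of M⁻¹ Ŝ, with Ŝ = Rᴴ S̃ R, M⁻¹ = J S̃⁻¹ Jᴴ and J R = id,
is real and at least 1. -/
theorem stmt12 {Wt Wh : Type*}
    [NormedAddCommGroup Wt] [InnerProductSpace ℂ Wt] [FiniteDimensional ℂ Wt]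
    [NormedAddCommGroup Wh] [InnerProductSpace ℂ Wh] [FiniteDimensional ℂ Wh]
    (St Sinv : Wt →ₗ[ℂ] Wt) (R : Wh →ₗ[ℂ] Wt) (J : Wt →ₗ[ℂ] Wh)
    (hS_sym : St.IsSymmetric)
    (hS_pos : ∀ v : Wt, v ≠ 0 → 0 < (inner ℂ (St v) v : ℂ).re)
    (hSinv₁ : Sinv ∘ₗ St = LinearMap.id) (hSinv₂ : St ∘ₗ Sinv = LinearMap.id)
    (hR : Function.Injective R)
    (hJR : J ∘ₗ R = LinearMap.id)
    (μ : ℂ)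
    (hμ : Module.End.HasEigenvalue
      ((J ∘ₗ Sinv ∘ₗ LinearMap.adjoint J) ∘ₗ (LinearMap.adjoint R ∘ₗ St ∘ₗ R)) μ) :
    μ.im = 0 ∧ 1 ≤ μ.re := by
  -- nonnegativity of the form
  have hN : ∀ x : Wt, 0 ≤ (inner ℂ (St x) x : ℂ).re := by
    intro x
    by_cases hx : x = 0
    · simp [hx]
    · exact (hS_pos x hx).le
  obtain ⟨v, hv⟩ := hμ.exists_hasEigenvector
  have hv0 : v ≠ 0 := hv.2
  have hTv : J (Sinv (LinearMap.adjoint J (LinearMap.adjoint R (St (R v))))) = μ • v := by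
    simpa using hv.apply_eq_smul
  set u : Wt := Sinv (LinearMap.adjoint J (LinearMap.adjoint R (St (R v)))) with hu
  have hStu : St u = LinearMap.adjoint J (LinearMap.adjoint R (St (R v))) := by
    have := congrArg (fun f : Wt →ₗ[ℂ] Wt =>
      f (LinearMap.adjoint J (LinearMap.adjoint R (St (R v))))) hSinv₂
    simpa [hu] using this
  set p : ℂ := inner ℂ (St (R v)) (R v) with hp
  set q : ℂ := inner ℂ (St u) u with hq
  -- p is real and positive
  have hRv0 : R v ≠ 0 := fun h => hv0 (hR (by simpa using h))
  have hp_pos : 0 < p.re := hS_pos (R v) hRv0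
  have hp_im : p.im = 0 := by
    have : (starRingEnd ℂ) p = p := by
      rw [hp, inner_conj_symm]
      exact (hS_sym (R v) (R v)).symm
    exact Complex.conj_eq_iff_im.mp this
  -- q is real
  have hq_im : q.im = 0 := by
    have : (starRingEnd ℂ) q = q := by
      rw [hq, inner_conj_symm]
      exact (hS_sym u u).symm
    exact Complex.conj_eq_iff_im.mp this
  -- inner ℂ (St u) (R v) = p
  have h1 : (inner ℂ (St u) (R v) : ℂ) = p := by
    have hJRv : J (R v) = v := by
      have := congrArg (fun f : Wh →ₗ[ℂ] Wh => f v) hJR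
      simpa using this
    rw [hStu, LinearMap.adjoint_inner_left, LinearMap.adjoint_inner_left, hJRv, hp]
  -- q = μ * p
  have h2 : q = μ * p := by
    rw [hq, hStu, LinearMap.adjoint_inner_left, LinearMap.adjoint_inner_left]
    rw [hu] at hTv ⊢
    rw [hTv, map_smul, inner_smul_right, hp]
  -- Cauchy–Schwarz
  have h3 : (inner ℂ (St (R v)) u : ℂ) = p := by
    rw [← inner_conj_symm, ← hS_sym, h1]
    exact Complex.conj_eq_iff_im.mpr hp_im
  have hcs := cs_aux St hS_sym hN u (R v)
  rw [h1, h3] at hcs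
  -- so ‖p‖^2 ≤ q.re * p.re
  have hnp : ‖p‖ = p.re := by
    rw [Complex.norm_def, Complex.normSq_apply, hp_im]
    simpa using Real.sqrt_mul_self hp_pos.le
  rw [hnp] at hcs
  have hqre : q.re = μ.re * p.re := by
    rw [h2, Complex.mul_re, hp_im]; ring
  have hqim : μ.im * p.re = 0 := by
    have := hq_im
    rw [h2, Complex.mul_im, hp_im] at this
    simpa using this
  have hμim : μ.im = 0 := by
    rcases mul_eq_zero.mp hqim with h | h
    · exact h
    · exact absurd h hp_pos.ne'
  refine ⟨hμim, ?_⟩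
  rw [hqre] at hcs
  have hcs' : p.re * p.re ≤ μ.re * p.re * p.re := hcs
  nlinarith [mul_pos hp_pos hp_pos, hcs']
end
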